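/- arXiv:1407.2723 — 5 statements merged into one kernel-verified Lean document; each statement's English description precedes it below -/
import Mathlib

section
/- Let f be a polynomial in three variables with real coefficients such that for all θ, x, y, z ∈ ℝ one has f(x, y·cos θ − z·sin θ, y·sin θ + z·cos θ) = f(x, y, z) (i.e., f is invariant under all rotations about the x-axis). Then there exists a polynomial P in two variables with real coefficients such that f(x, y, z) = P(x, y² + z²) for all (x, y, z) ∈ ℝ³. -/
open MvPolynomial

lemma my_eval_aeval {n m : ℕ} (v : Fin m → ℝ) (g : Fin n → MvPolynomial (Fin m) ℝ)
    (q : MvPolynomial (Fin n) ℝ) :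
    eval v (aeval g q) = eval (fun i => eval v (g i)) q := by
  rw [aeval_def, eval_eval₂]
  have : (eval v).comp (algebraMap ℝ (MvPolynomial (Fin m) ℝ)) = RingHom.id ℝ := by
    ext r; simp
  rw [this, eval₂_id]

lemma even_poly (q : MvPolynomial (Fin 2) ℝ)
    (hq : ∀ x t : ℝ, eval ![x, -t] q = eval ![x, t] q) :
    ∃ P : MvPolynomial (Fin 2) ℝ, ∀ x t : ℝ,
      eval ![x, t] q = eval ![x, t ^ 2] P := by
  have key : ∀ (m : Fin 2 →₀ ℕ) (c : ℝ),
      aeval ![X 0, -X 1] (monomial m c) = monomial m ((-1 : ℝ) ^ (m 1) * c) := by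
    intro m c
    rw [aeval_monomial, monomial_eq,
      Finsupp.prod_fintype _ _ (fun i => pow_zero _),
      Finsupp.prod_fintype _ _ (fun i => pow_zero _)]
    simp only [Fin.prod_univ_two, Matrix.cons_val_zero, Matrix.cons_val_one, Matrix.head_cons,
      algebraMap_eq, map_mul, map_pow, map_neg, map_one]
    rw [neg_pow]
    ring
  have hinv : aeval ![X 0, -X 1] q = q := by
    apply MvPolynomial.funext
    intro v
    rw [my_eval_aeval]
    have h1 : (fun i => eval v (![X 0, -X 1] i)) = ![v 0, -(v 1)] := by
      funext i; fin_cases i <;> simp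
    have h2 : v = ![v 0, v 1] := by funext i; fin_cases i <;> rfl
    rw [h1]
    conv_rhs => rw [h2]
    exact hq (v 0) (v 1)
  have hodd : ∀ m : Fin 2 →₀ ℕ, Odd (m 1) → coeff m q = 0 := by
    intro m hm
    have h1 : coeff m (aeval ![X 0, -X 1] q) = (-1 : ℝ) ^ (m 1) * coeff m q := by
      conv_lhs => rw [q.as_sum, map_sum]
      rw [coeff_sum]
      simp only [key, coeff_monomial]
      rw [Finset.sum_ite_eq' q.support m (fun v => (-1 : ℝ) ^ (v 1) * coeff v q)]
      by_cases hmem : m ∈ q.support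
      · simp [hmem]
      · simp [hmem, MvPolynomial.notMem_support_iff.mp hmem]
    rw [hinv, hm.neg_one_pow] at h1
    linarith
  set e : (Fin 2 →₀ ℕ) → (Fin 2 →₀ ℕ) :=
    fun m => Finsupp.single 0 (m 0) + Finsupp.single 1 (m 1 / 2) with he
  refine ⟨∑ m ∈ q.support, monomial (e m) (coeff m q), fun x t => ?_⟩
  conv_lhs => rw [q.as_sum]
  rw [map_sum, map_sum]
  apply Finset.sum_congr rfl
  intro m _
  rw [eval_monomial, eval_monomial,
    Finsupp.prod_fintype _ _ (fun i => pow_zero _),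
    Finsupp.prod_fintype _ _ (fun i => pow_zero _)]
  have e0 : e m 0 = m 0 := by simp [he, Finsupp.single_apply]
  have e1 : e m 1 = m 1 / 2 := by simp [he, Finsupp.single_apply]
  simp only [Fin.prod_univ_two, Matrix.cons_val_zero, Matrix.cons_val_one, Matrix.head_cons,
    e0, e1]
  rcases Nat.even_or_odd (m 1) with hev | ho
  · obtain ⟨k, hk⟩ := hev
    have hk2 : m 1 / 2 = k := by omega
    rw [hk2, hk, ← pow_mul]
    ring_nf
  · rw [hodd m ho]
    ring

/-- A real polynomial in three variables invariant under all rotations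
about the x-axis is of the form `P(x, y² + z²)` for some real polynomial `P` in two
variables. -/
theorem rotation_invariant_polynomial_is_sor
    (f : MvPolynomial (Fin 3) ℝ)
    (h : ∀ θ x y z : ℝ,
      MvPolynomial.eval
        ![x, y * Real.cos θ - z * Real.sin θ, y * Real.sin θ + z * Real.cos θ] f =
      MvPolynomial.eval ![x, y, z] f) :
    ∃ P : MvPolynomial (Fin 2) ℝ, ∀ x y z : ℝ,
      MvPolynomial.eval ![x, y, z] f = MvPolynomial.eval ![x, y ^ 2 + z ^ 2] P := by
  set q : MvPolynomial (Fin 2) ℝ := aeval ![X 0, X 1, 0] f with hqdef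
  have hq : ∀ x t : ℝ, eval ![x, t] q = eval ![x, t, 0] f := by
    intro x t
    rw [hqdef, my_eval_aeval]
    have hv : (fun i => eval ![x, t] (![X 0, X 1, 0] i)) = ![x, t, 0] := by
      funext i; fin_cases i <;> simp
    rw [hv]
  have heven : ∀ x t : ℝ, eval ![x, -t] q = eval ![x, t] q := by
    intro x t
    rw [hq, hq]
    have := h Real.pi x t 0
    simpa using this
  obtain ⟨P, hP⟩ := even_poly q heven
  refine ⟨P, fun x y z => ?_⟩
  set c : ℂ := ⟨y, z⟩ with hc
  have hy : ‖c‖ * Real.cos (Complex.arg c) = y := Complex.norm_mul_cos_arg c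
  have hz : ‖c‖ * Real.sin (Complex.arg c) = z := Complex.norm_mul_sin_arg c
  have hr : ‖c‖ ^ 2 = y ^ 2 + z ^ 2 := by
    rw [Complex.sq_norm, Complex.normSq_mk]; ring
  have hrot := h (Complex.arg c) x ‖c‖ 0
  calc eval ![x, y, z] f
      = eval ![x, ‖c‖, 0] f := by
        rw [← hrot]
        have hv : ![x, ‖c‖ * Real.cos c.arg - 0 * Real.sin c.arg,
            ‖c‖ * Real.sin c.arg + 0 * Real.cos c.arg] = ![x, y, z] := by
          funext i; fin_cases i <;> simp [hy, hz]
        rw [hv]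
    _ = eval ![x, ‖c‖] q := (hq _ _).symm
    _ = eval ![x, ‖c‖ ^ 2] P := hP _ _
    _ = eval ![x, y ^ 2 + z ^ 2] P := by rw [hr]
end

section
/- Let r̃, q̃, r̂, q̂, d be polynomials in one variable with real coefficients such that r̃·q̃ = r̂·q̂·d². Then for all x, y, z ∈ ℝ with d(x) ≠ 0 and q̃(x)·(y² + z²) = r̃(x), one has (q̃(x)·y/d(x))² + (q̃(x)·z/d(x))² = r̂(x)·q̂(x); that is, the map τ₂ : (x, y, z) ↦ (x, q̃(x)·y/d(x), q̃(x)·z/d(x)) maps the surface T′ : q̃(x)·(y² + z²) − r̃(x) = 0 into the tubular surface T : y² + z² − r̂(x)·q̂(x) = 0. -/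
open Polynomial

/-- The map `τ₂ : (x,y,z) ↦ (x, q̃(x)·y/d(x), q̃(x)·z/d(x))` maps the
surface `T' : q̃(x)·(y² + z²) - r̃(x) = 0` into the tubular surface
`T : y² + z² - r̂(x)·q̂(x) = 0`, provided `r̃·q̃ = r̂·q̂·d²`. -/
theorem tau2_maps_Tprime_into_tubular
    (rt qt rh qh d : Polynomial ℝ) (hfac : rt * qt = rh * qh * d ^ 2) :
    ∀ x y z : ℝ, d.eval x ≠ 0 → qt.eval x * (y ^ 2 + z ^ 2) = rt.eval x →
      (qt.eval x * y / d.eval x) ^ 2 + (qt.eval x * z / d.eval x) ^ 2 =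
        rh.eval x * qh.eval x := by
  intro x y z hd hT
  have hfx : rt.eval x * qt.eval x = rh.eval x * qh.eval x * (d.eval x) ^ 2 := by
    have := congrArg (eval x) hfac
    simpa using this
  field_simp
  linear_combination (eval x qt) * hT + hfx
end

section
/- Let P : ℝ² → ℝ be a function, and let p̃, q̃, r̃, r̂, q̂, d be polynomials in one variable with real coefficients such that r̃·q̃ = r̂·q̂·d² and such that P(p̃(t)/q̃(t), r̃(t)/q̃(t)) = 0 for every t ∈ ℝ with q̃(t) ≠ 0. Then for all x, y, z ∈ ℝ with q̃(x) ≠ 0 and y² + z² = r̂(x)·q̂(x), one has P(p̃(x)/q̃(x), (d(x)·y/q̃(x))² + (d(x)·z/q̃(x))²) = 0; that is, the map τ : (x, y, z) ↦ (p̃(x)/q̃(x), d(x)·y/q̃(x), d(x)·z/q̃(x)) maps the tubular surface T : y² + z² − r̂(x)·q̂(x) = 0 into the surface of revolution X : P(x, y² + z²) = 0. -/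
open Polynomial

/-- The map `τ : (x,y,z) ↦ (p̃(x)/q̃(x), d(x)·y/q̃(x), d(x)·z/q̃(x))`
maps the tubular surface `T : y² + z² - r̂(x)·q̂(x) = 0` into the surface of
revolution `X : P(x, y² + z²) = 0`, where `(p̃/q̃, r̃/q̃)` parameterizes the curve
`P² : P(x, y) = 0` and `r̃·q̃ = r̂·q̂·d²`. -/
theorem tau_maps_tubular_into_sor
    (P : ℝ → ℝ → ℝ) (pt qt rt rh qh d : Polynomial ℝ)
    (hfac : rt * qt = rh * qh * d ^ 2)
    (hpar : ∀ t : ℝ, qt.eval t ≠ 0 → P (pt.eval t / qt.eval t) (rt.eval t / qt.eval t) = 0) :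
    ∀ x y z : ℝ, qt.eval x ≠ 0 → y ^ 2 + z ^ 2 = rh.eval x * qh.eval x →
      P (pt.eval x / qt.eval x)
        ((d.eval x * y / qt.eval x) ^ 2 + (d.eval x * z / qt.eval x) ^ 2) = 0 := by
  intro x y z hq hT
  have hfacx : rt.eval x * qt.eval x = rh.eval x * qh.eval x * d.eval x ^ 2 := by
    have := congrArg (Polynomial.eval x) hfac
    simpa using this
  have key : (d.eval x * y / qt.eval x) ^ 2 + (d.eval x * z / qt.eval x) ^ 2
      = rt.eval x / qt.eval x := by
    field_simp
    linear_combination eval x d ^ 2 * hT - hfacx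
  rw [key]
  exact hpar x hq
end

section
/- Let g : ℝ → ℝ be a continuous function. The set T = {(x, y, z) ∈ ℝ³ : y² + z² = g(x)} is connected (nonempty and not separable into two disjoint nonempty relatively open subsets) if and only if the set {x ∈ ℝ : g(x) ≥ 0} is connected. -/
open Set

/-- For a continuous `g : ℝ → ℝ`, the tubular surface
`T = {(x,y,z) : y² + z² = g(x)}` is connected if and only if `{x : g(x) ≥ 0}` is
connected. -/
theorem tubular_connected_iff (g : ℝ → ℝ) (hg : Continuous g) :
    IsConnected {p : ℝ × ℝ × ℝ | p.2.1 ^ 2 + p.2.2 ^ 2 = g p.1} ↔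
      IsConnected {x : ℝ | 0 ≤ g x} := by
  constructor
  · intro hT
    have himg : Prod.fst '' {p : ℝ × ℝ × ℝ | p.2.1 ^ 2 + p.2.2 ^ 2 = g p.1}
        = {x : ℝ | 0 ≤ g x} := by
      ext x
      constructor
      · rintro ⟨⟨a, b, c⟩, hp, rfl⟩
        simp only [mem_setOf_eq] at hp ⊢
        rw [← hp]; positivity
      · intro hx
        exact ⟨⟨x, Real.sqrt (g x), 0⟩, by
          simp only [mem_setOf_eq]
          rw [Real.sq_sqrt hx]; ring, rfl⟩
    rw [← himg]
    exact hT.image _ continuous_fst.continuousOn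
  · intro hS
    have h : (fun p : ℝ × ℝ => (p.1, Real.sqrt (g p.1) * Real.cos p.2,
        Real.sqrt (g p.1) * Real.sin p.2)) '' ({x : ℝ | 0 ≤ g x} ×ˢ univ)
        = {p : ℝ × ℝ × ℝ | p.2.1 ^ 2 + p.2.2 ^ 2 = g p.1} := by
      ext ⟨x, y, z⟩
      constructor
      · rintro ⟨⟨a, θ⟩, ⟨ha, -⟩, heq⟩
        simp only [Prod.mk.injEq] at heq
        obtain ⟨rfl, rfl, rfl⟩ := heq
        simp only [mem_setOf_eq] at ha ⊢
        rw [mul_pow, mul_pow, ← mul_add, Real.cos_sq_add_sin_sq, mul_one,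
          Real.sq_sqrt ha]
      · intro hp
        simp only [mem_setOf_eq] at hp
        have hx : 0 ≤ g x := by rw [← hp]; positivity
        by_cases h0 : g x = 0
        · have hy : y = 0 := by nlinarith [sq_nonneg y, sq_nonneg z]
          have hz : z = 0 := by nlinarith [sq_nonneg y, sq_nonneg z]
          refine ⟨⟨x, 0⟩, ⟨hx, trivial⟩, ?_⟩
          simp [hy, hz, h0]
        · have hgpos : 0 < g x := lt_of_le_of_ne hx (Ne.symm h0)
          set w : ℂ := ⟨y, z⟩ with hw
          have hwne : w ≠ 0 := by
            intro hc
            have hy : y = 0 := congrArg Complex.re hc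
            have hz : z = 0 := congrArg Complex.im hc
            rw [hy, hz] at hp; norm_num at hp
            exact h0 hp.symm
          have habs : ‖w‖ = Real.sqrt (g x) := by
            rw [Complex.norm_def, Complex.normSq_mk, ← hp]
            ring_nf
          have hsq : (0:ℝ) < Real.sqrt (g x) := Real.sqrt_pos.mpr hgpos
          refine ⟨⟨x, Complex.arg w⟩, ⟨hx, trivial⟩, ?_⟩
          have hcos : Real.cos (Complex.arg w) = y / Real.sqrt (g x) := by
            rw [Complex.cos_arg hwne, habs]
          have hsin : Real.sin (Complex.arg w) = z / Real.sqrt (g x) := by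
            rw [Complex.sin_arg, habs]
          simp only [Prod.mk.injEq]
          refine ⟨trivial, ?_, ?_⟩
          · rw [hcos]; field_simp
          · rw [hsin]; field_simp
    rw [← h]
    refine (hS.prod isConnected_univ).image _ (Continuous.continuousOn ?_)
    exact continuous_fst.prodMk
      (((hg.comp continuous_fst).sqrt.mul (Real.continuous_cos.comp continuous_snd)).prodMk
        ((hg.comp continuous_fst).sqrt.mul (Real.continuous_sin.comp continuous_snd)))
end

section
/- Let P be an irreducible polynomial in two variables x, w with real coefficients, and suppose the polynomial p(x, y) := P(x, y²) is reducible in ℝ[x, y]. Then there exist a nonzero constant c ∈ ℝ and an irreducible polynomial g ∈ ℝ[x, y] such that p(x, y) = c·g(x, y)·g(x, −y). -/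
open MvPolynomial

noncomputable section AuxRPSS

private def Phi : MvPolynomial (Fin 2) ℝ →ₐ[ℝ] MvPolynomial (Fin 2) ℝ :=
  aeval ![X 0, (X 1) ^ 2]

private def tau : MvPolynomial (Fin 2) ℝ →ₐ[ℝ] MvPolynomial (Fin 2) ℝ :=
  aeval ![X 0, -X 1]

private lemma tau_comp : tau.comp tau = AlgHom.id ℝ (MvPolynomial (Fin 2) ℝ) := by
  apply MvPolynomial.algHom_ext
  intro i
  fin_cases i <;> simp [tau]

@[simp] private lemma tau_tau (q : MvPolynomial (Fin 2) ℝ) : tau (tau q) = q := by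
  simpa using DFunLike.congr_fun tau_comp q

private lemma tau_comp_Phi : tau.comp Phi = Phi := by
  apply MvPolynomial.algHom_ext
  intro i
  fin_cases i <;> simp [tau, Phi]

private lemma tau_Phi (Q : MvPolynomial (Fin 2) ℝ) : tau (Phi Q) = Phi Q :=
  DFunLike.congr_fun tau_comp_Phi Q

private lemma tau_C (c : ℝ) : tau (C c) = C c := by
  simp [tau, algHom_C]

private lemma Phi_C (c : ℝ) : Phi (C c) = C c := by
  simp [Phi, algHom_C]

private lemma Phi_X1 : Phi (X 1) = (X 1 : MvPolynomial (Fin 2) ℝ) ^ 2 := by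
  simp [Phi]

private lemma tau_X1 : tau (X 1) = -(X 1 : MvPolynomial (Fin 2) ℝ) := by
  simp [tau]

/-- doubling of the second exponent -/
private def Dbl (m : Fin 2 →₀ ℕ) : Fin 2 →₀ ℕ :=
  Finsupp.single 0 (m 0) + Finsupp.single 1 (2 * m 1)

private lemma Dbl_apply0 (m : Fin 2 →₀ ℕ) : Dbl m 0 = m 0 := by
  simp [Dbl, Finsupp.single_apply]

private lemma Dbl_apply1 (m : Fin 2 →₀ ℕ) : Dbl m 1 = 2 * m 1 := by
  simp [Dbl, Finsupp.single_apply]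

private lemma Dbl_injective : Function.Injective Dbl := by
  intro m m' h
  have h0 := congrArg (fun f => f (0 : Fin 2)) h
  have h1 := congrArg (fun f => f (1 : Fin 2)) h
  simp only [Dbl_apply0, Dbl_apply1] at h0 h1
  have h1' : m 1 = m' 1 := by omega
  ext i
  fin_cases i
  · exact h0
  · exact h1'

private lemma Phi_monomial (m : Fin 2 →₀ ℕ) (a : ℝ) :
    Phi (monomial m a) = monomial (Dbl m) a := by
  have h1 : Phi (monomial m a) = C a * (X 0 ^ (m 0) * ((X 1 : MvPolynomial (Fin 2) ℝ) ^ 2) ^ (m 1)) := by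
    rw [show Phi = aeval ![X 0, (X 1) ^ 2] from rfl, aeval_monomial,
      Finsupp.prod_fintype _ _ (fun i => pow_zero _), Fin.prod_univ_two]
    simp [algebraMap_eq]
  have h2 : (monomial (Dbl m) a : MvPolynomial (Fin 2) ℝ)
      = C a * (X 0 ^ (m 0) * X 1 ^ (2 * m 1)) := by
    rw [monomial_eq, Finsupp.prod_fintype _ _ (fun i => pow_zero _), Fin.prod_univ_two,
      Dbl_apply0, Dbl_apply1]
  rw [h1, h2, ← pow_mul]

private lemma tau_monomial (m : Fin 2 →₀ ℕ) (a : ℝ) :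
    tau (monomial m a) = C ((-1 : ℝ) ^ (m 1)) * monomial m a := by
  have h1 : tau (monomial m a) = C a * (X 0 ^ (m 0) * (-(X 1 : MvPolynomial (Fin 2) ℝ)) ^ (m 1)) := by
    rw [show tau = aeval ![X 0, -X 1] from rfl, aeval_monomial,
      Finsupp.prod_fintype _ _ (fun i => pow_zero _), Fin.prod_univ_two]
    simp [algebraMap_eq]
  rw [h1, monomial_eq, Finsupp.prod_fintype _ _ (fun i => pow_zero _), Fin.prod_univ_two]
  rw [neg_pow, show ((-1 : MvPolynomial (Fin 2) ℝ)) ^ (m 1) = C ((-1:ℝ) ^ (m 1)) by simp]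
  ring

private lemma coeff_tau (q : MvPolynomial (Fin 2) ℝ) (m : Fin 2 →₀ ℕ) :
    coeff m (tau q) = (-1 : ℝ) ^ (m 1) * coeff m q := by
  classical
  induction q using MvPolynomial.induction_on' with
  | monomial m' a =>
      rw [tau_monomial, coeff_C_mul, coeff_monomial]
      split_ifs with h
      · subst h; ring
      · ring
  | add p q hp hq =>
      rw [map_add, coeff_add, coeff_add, hp, hq]; ring

private lemma coeff_Phi (P : MvPolynomial (Fin 2) ℝ) (m : Fin 2 →₀ ℕ) :
    coeff (Dbl m) (Phi P) = coeff m P := by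
  classical
  conv_lhs => rw [P.as_sum, map_sum]
  rw [coeff_sum]
  simp_rw [Phi_monomial, coeff_monomial, Dbl_injective.eq_iff]
  rw [Finset.sum_ite_eq' P.support m (fun v => coeff v P)]
  split_ifs with h
  · rfl
  · exact (MvPolynomial.notMem_support_iff.mp h).symm

private lemma Phi_injective : Function.Injective Phi := by
  intro P Q h
  ext m
  rw [← coeff_Phi P m, ← coeff_Phi Q m, h]

private lemma exists_preimage {q : MvPolynomial (Fin 2) ℝ} (h : tau q = q) :
    ∃ Q, Phi Q = q := by
  classical
  have heven : ∀ m ∈ q.support, 2 ∣ m 1 := by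
    intro m hm
    by_contra hodd
    have hodd' : Odd (m 1) := Nat.odd_iff.mpr (by omega)
    have h1 : coeff m q = (-1 : ℝ) ^ (m 1) * coeff m q := by
      conv_lhs => rw [← h, coeff_tau]
    rw [hodd'.neg_one_pow] at h1
    have : coeff m q = 0 := by linarith
    exact MvPolynomial.mem_support_iff.mp hm this
  refine ⟨∑ m ∈ q.support, monomial
    (Finsupp.single 0 (m 0) + Finsupp.single 1 (m 1 / 2)) (coeff m q), ?_⟩
  rw [map_sum]
  conv_rhs => rw [q.as_sum]
  refine Finset.sum_congr rfl fun m hm => ?_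
  rw [Phi_monomial]
  have h2 := heven m hm
  have hd : Dbl (Finsupp.single 0 (m 0) + Finsupp.single 1 (m 1 / 2)) = m := by
    have e0 : Dbl (Finsupp.single 0 (m 0) + Finsupp.single 1 (m 1 / 2)) 0 = m 0 := by
      rw [Dbl_apply0]; simp [Finsupp.single_apply]
    have e1 : Dbl (Finsupp.single 0 (m 0) + Finsupp.single 1 (m 1 / 2)) 1 = m 1 := by
      rw [Dbl_apply1]
      have h3 : ((Finsupp.single (0 : Fin 2) (m 0) + Finsupp.single 1 (m 1 / 2) : Fin 2 →₀ ℕ)) 1 = m 1 / 2 := by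
        simp [Finsupp.single_apply]
      rw [h3]; omega
    ext i
    fin_cases i
    · exact e0
    · exact e1
  rw [hd]

private lemma X1_dvd {q : MvPolynomial (Fin 2) ℝ} (h : tau q = -q) :
    (X 1 : MvPolynomial (Fin 2) ℝ) ∣ q := by
  classical
  have hodd : ∀ m ∈ q.support, m 1 ≠ 0 := by
    intro m hm h0
    have h1 : coeff m q = -coeff m q := by
      have h2 := coeff_tau q m
      rw [h, coeff_neg, h0, pow_zero, one_mul] at h2
      linarith [h2]
    have : coeff m q = 0 := by linarith
    exact MvPolynomial.mem_support_iff.mp hm this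
  conv_rhs => rw [q.as_sum]
  refine Finset.dvd_sum fun m hm => ?_
  have h1 : m 1 ≠ 0 := hodd m hm
  refine ⟨monomial (m - Finsupp.single 1 1) (coeff m q), ?_⟩
  have hd : Finsupp.single (1 : Fin 2) 1 + (m - Finsupp.single 1 1) = m := by
    have e0 : ((Finsupp.single (1 : Fin 2) 1 + (m - Finsupp.single 1 1) : Fin 2 →₀ ℕ)) 0 = m 0 := by
      simp [Finsupp.single_apply, Finsupp.tsub_apply]
    have e1 : ((Finsupp.single (1 : Fin 2) 1 + (m - Finsupp.single 1 1) : Fin 2 →₀ ℕ)) 1 = m 1 := by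
      rw [Finsupp.add_apply, Finsupp.tsub_apply, Finsupp.single_apply, if_pos rfl]
      omega
    ext i
    fin_cases i
    · exact e0
    · exact e1
  rw [X, monomial_mul, hd, one_mul]

private lemma isUnit_eq_C {q : MvPolynomial (Fin 2) ℝ} (h : IsUnit q) :
    ∃ c : ℝ, c ≠ 0 ∧ q = C c := by
  have h2 := h.map (finSuccEquiv ℝ 1)
  obtain ⟨r, hr, hCr⟩ := Polynomial.isUnit_iff.mp h2
  have h1 := hr.map (finSuccEquiv ℝ 0)
  obtain ⟨s, hs, hCs⟩ := Polynomial.isUnit_iff.mp h1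
  obtain ⟨c, rfl⟩ := MvPolynomial.C_surjective (Fin 0) s
  have key0 : (finSuccEquiv ℝ 0) (C c) = Polynomial.C (C c) := by
    have h3 := RingHom.congr_fun (finSuccEquiv_comp_C_eq_C (R := ℝ) 0) c
    simp only [RingHom.coe_comp, Function.comp_apply, RingEquiv.coe_toRingHom] at h3
    rw [← h3]
    simp
  have hrC : r = C c := by
    apply (finSuccEquiv ℝ 0).injective
    rw [key0, hCs]
  have key1 : (finSuccEquiv ℝ 1) (C c) = Polynomial.C (C c) := by
    have h3 := RingHom.congr_fun (finSuccEquiv_comp_C_eq_C (R := ℝ) 1) c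
    simp only [RingHom.coe_comp, Function.comp_apply, RingEquiv.coe_toRingHom] at h3
    rw [← h3]
    simp
  have hqC : q = C c := by
    apply (finSuccEquiv ℝ 1).injective
    rw [key1, ← hCr, hrC]
  refine ⟨c, fun hc => ?_, hqC⟩
  exact h.ne_zero (by rw [hqC, hc, map_zero])

private lemma irreducible_tau {g : MvPolynomial (Fin 2) ℝ} (hg : Irreducible g) :
    Irreducible (tau g) := by
  constructor
  · intro hu
    exact hg.not_isUnit (by simpa using hu.map tau)
  · intro a b hab
    have h2 : g = tau a * tau b := by rw [← tau_tau g, hab, map_mul]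
    rcases hg.isUnit_or_isUnit h2 with h | h
    · exact Or.inl (by simpa using h.map tau)
    · exact Or.inr (by simpa using h.map tau)

end AuxRPSS

/-- If `P(x, w)` is irreducible over ℝ but `p(x, y) := P(x, y²)` is
reducible, then `p(x, y) = c·g(x, y)·g(x, -y)` for some nonzero constant `c` and
some irreducible polynomial `g`. -/
theorem reducible_profile_splits_symmetrically
    (P : MvPolynomial (Fin 2) ℝ) (hP : Irreducible P)
    (p : MvPolynomial (Fin 2) ℝ)
    (hp : p = MvPolynomial.aeval ![MvPolynomial.X 0, (MvPolynomial.X 1) ^ 2] P)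
    (hred : ¬ Irreducible p) :
    ∃ c : ℝ, c ≠ 0 ∧ ∃ g : MvPolynomial (Fin 2) ℝ, Irreducible g ∧
      p = MvPolynomial.C c * g *
        MvPolynomial.aeval ![MvPolynomial.X 0, -MvPolynomial.X 1] g := by
  classical
  have hPhi : p = Phi P := hp
  have htp : tau p = p := by rw [hPhi]; exact tau_Phi P
  have hpne : p ≠ 0 := by
    rw [hPhi]
    intro h0
    exact hP.ne_zero (Phi_injective (by rw [h0, map_zero]))
  have hpnu : ¬ IsUnit p := by
    intro h
    obtain ⟨c, hc, hqc⟩ := isUnit_eq_C h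
    have hPc : P = C c := Phi_injective (by rw [← hPhi, hqc, Phi_C])
    exact hP.not_isUnit (hPc ▸ (isUnit_iff_ne_zero.mpr hc).map (C : ℝ →+* MvPolynomial (Fin 2) ℝ))
  obtain ⟨g, hg, hdvd⟩ := WfDvdMonoid.exists_irreducible_factor hpnu hpne
  obtain ⟨h, hfac⟩ := hdvd
  have htg_irr : Irreducible (tau g) := irreducible_tau hg
  by_cases hass : Associated (tau g) g
  · -- `g` and `tau g` are associated
    obtain ⟨u, hu⟩ := hass
    obtain ⟨c, hc0, hcu⟩ := isUnit_eq_C u.isUnit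
    have hg_eq : g = tau g * C c := by rw [← hcu]; exact hu.symm
    have htt : tau g = g * C c := by
      have h2 := congrArg tau hg_eq
      rw [map_mul, tau_tau, tau_C] at h2
      exact h2
    have hc2 : c * c = 1 := by
      have h2 : g * (C c * C c) = g * 1 := by
        rw [mul_one]
        conv_rhs => rw [hg_eq, htt]
        ring
      have h3 := mul_left_cancel₀ hg.ne_zero h2
      have h4 : (C (c * c) : MvPolynomial (Fin 2) ℝ) = C 1 := by rw [C_mul, h3, C_1]
      exact C_injective (Fin 2) ℝ h4
    rcases mul_self_eq_one_iff.mp hc2 with h1 | h1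
    · -- c = 1 : contradiction with irreducibility of P / reducibility of p
      have htg : tau g = g := by rw [htt, h1, C_1, mul_one]
      have hth : tau h = h := by
        apply mul_left_cancel₀ hg.ne_zero
        calc g * tau h = tau (g * h) := by rw [map_mul, htg]
        _ = tau p := by rw [hfac]
        _ = p := htp
        _ = g * h := hfac
      obtain ⟨G, hG⟩ := exists_preimage htg
      obtain ⟨H, hH⟩ := exists_preimage hth
      have hPGH : P = G * H := Phi_injective (by rw [map_mul, hG, hH, ← hfac, hPhi])
      rcases hP.isUnit_or_isUnit hPGH with hu2 | hu2
      · obtain ⟨cG, hcG, hGc⟩ := isUnit_eq_C hu2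
        have hgC : g = C cG := by rw [← hG, hGc, Phi_C]
        exact absurd (hgC ▸ (isUnit_iff_ne_zero.mpr hcG).map
          (C : ℝ →+* MvPolynomial (Fin 2) ℝ)) hg.not_isUnit
      · obtain ⟨cH, hcH, hHc⟩ := isUnit_eq_C hu2
        have hhc : h = C cH := by rw [← hH, hHc, Phi_C]
        have hassoc : Associated g p := by
          refine ⟨((isUnit_iff_ne_zero.mpr hcH).map
            (C : ℝ →+* MvPolynomial (Fin 2) ℝ)).unit, ?_⟩
          rw [IsUnit.unit_spec, ← hhc, ← hfac]
        exact absurd (hassoc.irreducible hg) hred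
    · -- c = -1 : `g` is an associate of `X 1`
      have htg : tau g = -g := by rw [htt, h1]; simp
      have hX1g : (X 1 : MvPolynomial (Fin 2) ℝ) ∣ g := X1_dvd htg
      have hX1p : (X 1 : MvPolynomial (Fin 2) ℝ) ∣ p := hX1g.trans ⟨h, hfac⟩
      obtain ⟨r, hr⟩ := hX1p
      have hX1ne : (X 1 : MvPolynomial (Fin 2) ℝ) ≠ 0 := X_ne_zero 1
      have htr : tau r = -r := by
        have h2 : X 1 * r = X 1 * (-(tau r)) := by
          conv_lhs => rw [← hr, ← htp, hr, map_mul, tau_X1]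
          ring
        have h3 := mul_left_cancel₀ hX1ne h2
        exact neg_eq_iff_eq_neg.mp h3.symm
      obtain ⟨s, hs⟩ := X1_dvd htr
      have hp3 : p = (X 1 : MvPolynomial (Fin 2) ℝ) ^ 2 * s := by rw [hr, hs]; ring
      have hX2ne : ((X 1 : MvPolynomial (Fin 2) ℝ)) ^ 2 ≠ 0 := pow_ne_zero _ hX1ne
      have hts : tau s = s := by
        apply mul_left_cancel₀ hX2ne
        calc (X 1 : MvPolynomial (Fin 2) ℝ) ^ 2 * tau s
            = tau ((X 1 : MvPolynomial (Fin 2) ℝ) ^ 2 * s) := by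
              rw [map_mul, map_pow, tau_X1]; ring
        _ = tau p := by rw [hp3]
        _ = p := htp
        _ = (X 1 : MvPolynomial (Fin 2) ℝ) ^ 2 * s := hp3
      obtain ⟨S, hS⟩ := exists_preimage hts
      have hPXS : P = X 1 * S := Phi_injective (by rw [map_mul, hS, Phi_X1, ← hp3, hPhi])
      have hX1nu : ¬ IsUnit (X 1 : MvPolynomial (Fin 2) ℝ) := by
        intro hu2
        obtain ⟨c', hc', hXc⟩ := isUnit_eq_C hu2
        have h4 := congrArg totalDegree hXc
        rw [totalDegree_X, totalDegree_C] at h4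
        exact one_ne_zero h4
      rcases hP.isUnit_or_isUnit hPXS with hu2 | hu2
      · exact absurd hu2 hX1nu
      · obtain ⟨c', hc', hSc⟩ := isUnit_eq_C hu2
        have hsc : s = C c' := by rw [← hS, hSc, Phi_C]
        obtain ⟨t, ht⟩ := hX1g
        rcases hg.isUnit_or_isUnit ht with hu3 | hu3
        · exact absurd hu3 hX1nu
        · obtain ⟨tc, htc, htc_eq⟩ := isUnit_eq_C hu3
          refine ⟨-(c' * (tc⁻¹) ^ 2), ?_, g, hg, ?_⟩
          · exact neg_ne_zero.mpr (mul_ne_zero hc' (pow_ne_zero _ (inv_ne_zero htc)))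
          · show p = C (-(c' * (tc⁻¹) ^ 2)) * g * tau g
            rw [htg, hp3, hsc, ht, htc_eq]
            have hinv : (C tc⁻¹ : MvPolynomial (Fin 2) ℝ) * C tc = 1 := by
              rw [← C_mul, inv_mul_cancel₀ htc, C_1]
            simp only [map_neg, map_mul, map_pow]
            have hfinal : -(C c' * (C tc⁻¹ : MvPolynomial (Fin 2) ℝ) ^ 2) * (X 1 * C tc) *
                (-(X 1 * C tc)) = C c' * ((C tc⁻¹ : MvPolynomial (Fin 2) ℝ) * C tc) ^ 2
                  * (X 1 : MvPolynomial (Fin 2) ℝ) ^ 2 := by ring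
            rw [hfinal, hinv, one_pow, mul_one]
            exact mul_comm _ _
  · -- generic case : `g` and `tau g` are not associated
    have htg_prime : Prime (tau g) := UniqueFactorizationMonoid.irreducible_iff_prime.mp htg_irr
    have htgp : tau g ∣ g * h := by
      refine ⟨tau h, ?_⟩
      rw [← map_mul, ← hfac, htp, hfac]
    have hdvd_h : tau g ∣ h := by
      rcases htg_prime.2.2 _ _ htgp with h1 | h1
      · exact absurd (htg_irr.associated_of_dvd hg h1) hass
      · exact h1
    obtain ⟨q, hq⟩ := hdvd_h
    have hp2 : p = (g * tau g) * q := by rw [hfac, hq]; ring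
    have hne : g * tau g ≠ 0 := mul_ne_zero hg.ne_zero htg_irr.ne_zero
    have htq : tau q = q := by
      have h3 : p = (g * tau g) * tau q := by
        conv_lhs => rw [← htp, hp2]
        rw [map_mul, map_mul, tau_tau]
        ring
      exact mul_left_cancel₀ hne (h3.symm.trans hp2 : (g * tau g) * tau q = (g * tau g) * q)
    have htw : tau (g * tau g) = g * tau g := by rw [map_mul, tau_tau, mul_comm]
    obtain ⟨G, hG⟩ := exists_preimage htw
    obtain ⟨Q, hQ⟩ := exists_preimage htq
    have hPGQ : P = G * Q := Phi_injective (by rw [map_mul, hG, hQ, ← hp2, hPhi])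
    rcases hP.isUnit_or_isUnit hPGQ with hu | hu
    · obtain ⟨cG, hcG, hGc⟩ := isUnit_eq_C hu
      have h5 : g * tau g = C cG := by rw [← hG, hGc, Phi_C]
      have h6 : IsUnit (g * tau g) := h5 ▸ (isUnit_iff_ne_zero.mpr hcG).map
        (C : ℝ →+* MvPolynomial (Fin 2) ℝ)
      exact absurd (isUnit_of_mul_isUnit_left h6) hg.not_isUnit
    · obtain ⟨c, hc, hQc⟩ := isUnit_eq_C hu
      have hqc : q = C c := by rw [← hQ, hQc, Phi_C]
      refine ⟨c, hc, g, hg, ?_⟩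
      show p = C c * g * tau g
      rw [hp2, hqc]; ring
end
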